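/- The q-Chebyshev polynomials of the first kind satisfy the explicit formula T_n(x,s,q) = Σ_{j=0}^{⌊n/2⌋} q^{j²} ([n]_q/[n-j]_q) [n-j choose j]_q · ((-q;q)_{n-j-1}/(-q;q)_j) · s^j x^{n-2j} for all n > 0. -/

import Mathlib

/-- q-integer [n]_q = (1-q^n)/(1-q). -/
noncomputable def qint (q : ℂ) (n : ℕ) : ℂ := (1 - q ^ n) / (1 - q)

/-- q-factorial [n]_q!. -/
noncomputable def qfact (q : ℂ) (n : ℕ) : ℂ := ∏ i ∈ Finset.range n, qint q (i + 1)

/-- Gaussian (q-binomial) coefficient, 0 for k > n. -/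
noncomputable def qbinom (q : ℂ) (n k : ℕ) : ℂ :=
  if k ≤ n then qfact q n / (qfact q (n - k) * qfact q k) else 0

/-- q-shifted factorial (x;q)_n. -/
noncomputable def qpoch (x q : ℂ) (n : ℕ) : ℂ := ∏ i ∈ Finset.range n, (1 - q ^ i * x)

/-- q-Chebyshev polynomials of the first kind. -/
noncomputable def qcT (x s q : ℂ) : ℕ → ℂ
  | 0 => 1
  | 1 => x
  | n + 2 => (1 + q ^ (n + 1)) * x * qcT x s q (n + 1) + q ^ (n + 1) * s * qcT x s q n

lemma one_sub_pow_ne {q : ℂ} (hq1 : ‖q‖ < 1) {k : ℕ} (hk : 1 ≤ k) :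
    1 - q ^ k ≠ 0 := by
  intro h
  have h1 : q ^ k = 1 := by linear_combination -h
  have h2 : ‖q‖ ^ k < 1 :=
    pow_lt_one₀ (norm_nonneg q) hq1 (by omega)
  rw [← norm_pow, h1, norm_one] at h2
  exact lt_irrefl 1 h2

lemma one_add_pow_ne {q : ℂ} (hq1 : ‖q‖ < 1) {k : ℕ} (hk : 1 ≤ k) :
    1 + q ^ k ≠ 0 := by
  intro h
  have h1 : q ^ k = -1 := by linear_combination h
  have h2 : ‖q‖ ^ k < 1 :=
    pow_lt_one₀ (norm_nonneg q) hq1 (by omega)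
  rw [← norm_pow, h1] at h2
  simp at h2

lemma one_sub_ne {q : ℂ} (hq1 : ‖q‖ < 1) : 1 - q ≠ 0 := by
  simpa using one_sub_pow_ne hq1 (k := 1) le_rfl

lemma qint_ne {q : ℂ} (hq1 : ‖q‖ < 1) {k : ℕ} (hk : 1 ≤ k) : qint q k ≠ 0 :=
  div_ne_zero (one_sub_pow_ne hq1 hk) (one_sub_ne hq1)

lemma qfact_ne {q : ℂ} (hq1 : ‖q‖ < 1) (k : ℕ) : qfact q k ≠ 0 :=
  Finset.prod_ne_zero_iff.2 fun i _ => qint_ne hq1 (by omega)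

lemma qpoch_ne {q : ℂ} (hq1 : ‖q‖ < 1) (k : ℕ) : qpoch (-q) q k ≠ 0 :=
  Finset.prod_ne_zero_iff.2 fun i _ => by
    have := one_add_pow_ne hq1 (k := i + 1) (by omega)
    intro h; apply this; rw [← h]; ring

lemma qfact_succ (q : ℂ) (k : ℕ) : qfact q (k + 1) = qfact q k * qint q (k + 1) :=
  Finset.prod_range_succ _ _

lemma qpoch_succ (x q : ℂ) (k : ℕ) : qpoch x q (k + 1) = qpoch x q k * (1 - q ^ k * x) :=
  Finset.prod_range_succ _ _

/-- the summand in the explicit formula -/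
noncomputable def qterm (x s q : ℂ) (n j : ℕ) : ℂ :=
  q ^ (j ^ 2) * (qint q n / qint q (n - j)) * qbinom q (n - j) j *
    (qpoch (-q) q (n - j - 1) / qpoch (-q) q j) * s ^ j * x ^ (n - 2 * j)

lemma qterm_zero (x s q : ℂ) {n j : ℕ} (h : n < 2 * j) : qterm x s q n j = 0 := by
  have : qbinom q (n - j) j = 0 := if_neg (by omega)
  unfold qterm
  rw [this]; ring

-- generic termwise identity: m = 2*i+1+d, j = i+1


lemma qfact_zero (q : ℂ) : qfact q 0 = 1 := Finset.prod_range_zero _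
lemma qpoch_zero (x q : ℂ) : qpoch x q 0 = 1 := Finset.prod_range_zero _

set_option maxHeartbeats 1000000 in
/-- closed flat-fraction form of the summand, valid when `n = 2j + e` and `j + e = f + 1`. -/
lemma qterm_closed {q : ℂ} (hq1 : ‖q‖ < 1) (x s : ℂ) (j e f : ℕ)
    (hjf : j + e = f + 1) :
    qterm x s q (2 * j + e) j = q ^ (j ^ 2) * s ^ j * x ^ e *
      ((1 - q ^ (2 * j + e)) * qfact q f * qpoch (-q) q f) /
        ((1 - q) * qfact q e * qfact q j * qpoch (-q) q j) := by
  unfold qterm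
  rw [show 2 * j + e - j = f + 1 by omega,
      show 2 * j + e - 2 * j = e by omega,
      show f + 1 - 1 = f by omega]
  rw [qbinom, if_pos (by omega : j ≤ f + 1), show f + 1 - j = e by omega]
  rw [qfact_succ q f]
  unfold qint
  rw [show q ^ (f + 1) = q * q ^ f by ring]
  have h1 := one_sub_ne hq1
  have h2 : (1 : ℂ) - q * q ^ f ≠ 0 := by
    have := one_sub_pow_ne hq1 (k := f + 1) (by omega); intro h; apply this
    rw [← h]; ring
  have hfe := qfact_ne hq1 e
  have hff := qfact_ne hq1 f
  have hfj := qfact_ne hq1 j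
  have hpj := qpoch_ne hq1 j
  generalize (1 : ℂ) - q * q ^ f = u at *
  generalize (1 : ℂ) - q = v at *
  generalize (1 : ℂ) - q ^ (2 * j + e) = N at *
  generalize qfact q e = F1 at *
  generalize qfact q f = F2 at *
  generalize qfact q j = F3 at *
  generalize qpoch (-q) q j = P1 at *
  generalize qpoch (-q) q f = P2 at *
  rw [eq_div_iff (mul_ne_zero (mul_ne_zero (mul_ne_zero h1 hfe) hfj) hpj)]
  field_simp

set_option maxHeartbeats 2000000 in
/-- generic termwise identity: `m = 2*i+1+d`, `j = i+1`. -/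
lemma step_generic {q : ℂ} (hq1 : ‖q‖ < 1) (x s : ℂ) (i d : ℕ) :
    qterm x s q (2 * i + 1 + d + 2) (i + 1) =
      (1 + q ^ (2 * i + 1 + d + 1)) * x * qterm x s q (2 * i + 1 + d + 1) (i + 1) +
        q ^ (2 * i + 1 + d + 1) * s * qterm x s q (2 * i + 1 + d) i := by
  rw [show 2 * i + 1 + d + 2 = 2 * (i + 1) + (d + 1) by ring,
      qterm_closed hq1 x s (i + 1) (d + 1) (i + d + 1) (by omega),
      show 2 * (i + 1) + (d + 1) = 2 * i + 1 + d + 2 by ring]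
  rw [show 2 * i + 1 + d + 1 = 2 * (i + 1) + d by ring,
      qterm_closed hq1 x s (i + 1) d (i + d) (by omega),
      show 2 * (i + 1) + d = 2 * i + 1 + d + 1 by ring]
  rw [show 2 * i + 1 + d = 2 * i + (d + 1) by ring,
      qterm_closed hq1 x s i (d + 1) (i + d) (by omega),
      show 2 * i + (d + 1) = 2 * i + 1 + d by ring]
  have h1 := one_sub_ne hq1
  have hfd := qfact_ne hq1 d
  have hfd1 := qfact_ne hq1 (d + 1)
  have hfi := qfact_ne hq1 i
  have hfi1 := qfact_ne hq1 (i + 1)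
  have hpi := qpoch_ne hq1 i
  have hpi1 := qpoch_ne hq1 (i + 1)
  have hDA : (1 - q) * qfact q (d + 1) * qfact q (i + 1) * qpoch (-q) q (i + 1) ≠ 0 :=
    mul_ne_zero (mul_ne_zero (mul_ne_zero h1 hfd1) hfi1) hpi1
  have hDB : (1 - q) * qfact q d * qfact q (i + 1) * qpoch (-q) q (i + 1) ≠ 0 :=
    mul_ne_zero (mul_ne_zero (mul_ne_zero h1 hfd) hfi1) hpi1
  have hDC : (1 - q) * qfact q (d + 1) * qfact q i * qpoch (-q) q i ≠ 0 :=
    mul_ne_zero (mul_ne_zero (mul_ne_zero h1 hfd1) hfi) hpi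
  rw [← mul_div_assoc, ← mul_div_assoc, div_add_div _ _ hDB hDC,
      div_eq_div_iff hDA (mul_ne_zero hDB hDC)]
  rw [qfact_succ q (i + d), qfact_succ q d, qfact_succ q i,
      qpoch_succ (-q) q (i + d), qpoch_succ (-q) q i]
  unfold qint
  field_simp
  ring

set_option maxHeartbeats 1000000 in
/-- boundary termwise identity: `m = 2*k+2`, `j = k+2` (middle coefficient). -/
lemma step_special {q : ℂ} (hq1 : ‖q‖ < 1) (x s : ℂ) (k : ℕ) :
    qterm x s q (2 * k + 2 + 2) (k + 2) =
      (1 + q ^ (2 * k + 2 + 1)) * x * qterm x s q (2 * k + 2 + 1) (k + 2) +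
        q ^ (2 * k + 2 + 1) * s * qterm x s q (2 * k + 2) (k + 1) := by
  rw [qterm_zero x s q (show 2 * k + 2 + 1 < 2 * (k + 2) by omega)]
  rw [show 2 * k + 2 + 2 = 2 * (k + 2) + 0 by ring,
      qterm_closed hq1 x s (k + 2) 0 (k + 1) (by omega)]
  rw [show 2 * k + 2 = 2 * (k + 1) + 0 by ring,
      qterm_closed hq1 x s (k + 1) 0 k (by omega),
      show 2 * (k + 1) + 0 = 2 * k + 2 by ring]
  have h1 := one_sub_ne hq1
  have hf0 := qfact_ne hq1 0
  have hfk := qfact_ne hq1 k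
  have hfk1 := qfact_ne hq1 (k + 1)
  have hfk2 := qfact_ne hq1 (k + 2)
  have hpk := qpoch_ne hq1 k
  have hpk1 := qpoch_ne hq1 (k + 1)
  have hpk2 := qpoch_ne hq1 (k + 2)
  have hDA : (1 - q) * qfact q 0 * qfact q (k + 2) * qpoch (-q) q (k + 2) ≠ 0 :=
    mul_ne_zero (mul_ne_zero (mul_ne_zero h1 hf0) hfk2) hpk2
  have hDC : (1 - q) * qfact q 0 * qfact q (k + 1) * qpoch (-q) q (k + 1) ≠ 0 :=
    mul_ne_zero (mul_ne_zero (mul_ne_zero h1 hf0) hfk1) hpk1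
  rw [mul_zero, zero_add, ← mul_div_assoc, div_eq_div_iff hDA hDC]
  rw [qfact_succ q (k + 1), qfact_succ q k, qpoch_succ (-q) q (k + 1), qpoch_succ (-q) q k]
  unfold qint
  field_simp
  ring

set_option maxHeartbeats 1000000 in
/-- `j = 0` termwise identity. -/
lemma step_j0 {q : ℂ} (hq1 : ‖q‖ < 1) (x s : ℂ) (m : ℕ) :
    qterm x s q (m + 2) 0 = (1 + q ^ (m + 1)) * x * qterm x s q (m + 1) 0 := by
  rw [show m + 2 = 2 * 0 + (m + 2) by ring,
      qterm_closed hq1 x s 0 (m + 2) (m + 1) (by omega),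
      show 2 * 0 + (m + 2) = m + 2 by ring]
  rw [show m + 1 = 2 * 0 + (m + 1) by ring,
      qterm_closed hq1 x s 0 (m + 1) m (by omega),
      show 2 * 0 + (m + 1) = m + 1 by ring]
  have h1 := one_sub_ne hq1
  have hf0 := qfact_ne hq1 0
  have hp0 := qpoch_ne hq1 0
  have hfm := qfact_ne hq1 m
  have hfm1 := qfact_ne hq1 (m + 1)
  have hfm2 := qfact_ne hq1 (m + 2)
  have hpm := qpoch_ne hq1 m
  have hDA : (1 - q) * qfact q (m + 2) * qfact q 0 * qpoch (-q) q 0 ≠ 0 :=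
    mul_ne_zero (mul_ne_zero (mul_ne_zero h1 hfm2) hf0) hp0
  have hDB : (1 - q) * qfact q (m + 1) * qfact q 0 * qpoch (-q) q 0 ≠ 0 :=
    mul_ne_zero (mul_ne_zero (mul_ne_zero h1 hfm1) hf0) hp0
  rw [← mul_div_assoc, div_eq_div_iff hDA hDB]
  rw [qfact_succ q (m + 1), qfact_succ q m, qpoch_succ (-q) q m]
  unfold qint
  field_simp
  ring

/-- combined per-index identity. -/
lemma step_index {q : ℂ} (hq1 : ‖q‖ < 1) (x s : ℂ) (m j : ℕ) (hm : 1 ≤ m) :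
    qterm x s q (m + 2) (j + 1) =
      (1 + q ^ (m + 1)) * x * qterm x s q (m + 1) (j + 1) +
        q ^ (m + 1) * s * qterm x s q m j := by
  rcases lt_trichotomy m (2 * j) with h | h | h
  · rw [qterm_zero x s q (show m + 2 < 2 * (j + 1) by omega),
        qterm_zero x s q (show m + 1 < 2 * (j + 1) by omega),
        qterm_zero x s q (show m < 2 * j by omega)]
    ring
  · obtain ⟨k, rfl⟩ : ∃ k, j = k + 1 := ⟨j - 1, by omega⟩
    have hm2 : m = 2 * k + 2 := by omega
    subst hm2
    exact step_special hq1 x s k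
  · obtain ⟨d, rfl⟩ : ∃ d, m = 2 * j + 1 + d := ⟨m - (2 * j + 1), by omega⟩
    exact step_generic hq1 x s j d

lemma qcT_succ_succ (x s q : ℂ) (n : ℕ) :
    qcT x s q (n + 2) = (1 + q ^ (n + 1)) * x * qcT x s q (n + 1) + q ^ (n + 1) * s * qcT x s q n :=
  rfl

/-- sum-level step. -/
lemma step_sum {q : ℂ} (hq1 : ‖q‖ < 1) (x s : ℂ) (m : ℕ) (hm : 1 ≤ m) :
    ∑ j ∈ Finset.range (m + 3), qterm x s q (m + 2) j =
      (1 + q ^ (m + 1)) * x * ∑ j ∈ Finset.range (m + 2), qterm x s q (m + 1) j +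
        q ^ (m + 1) * s * ∑ j ∈ Finset.range (m + 1), qterm x s q m j := by
  have e1 : ∑ j ∈ Finset.range (m + 3), qterm x s q (m + 1) j =
      ∑ j ∈ Finset.range (m + 2), qterm x s q (m + 1) j := by
    rw [Finset.sum_range_succ, qterm_zero x s q (show m + 1 < 2 * (m + 2) by omega), add_zero]
  have e2 : ∑ j ∈ Finset.range (m + 2), qterm x s q m j =
      ∑ j ∈ Finset.range (m + 1), qterm x s q m j := by
    rw [Finset.sum_range_succ, qterm_zero x s q (show m < 2 * (m + 1) by omega), add_zero]
  rw [← e1, ← e2, Finset.sum_range_succ' (fun j => qterm x s q (m + 2) j),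
      Finset.sum_range_succ' (fun j => qterm x s q (m + 1) j)]
  have e3 : ∀ j ∈ Finset.range (m + 2), qterm x s q (m + 2) (j + 1) =
      (1 + q ^ (m + 1)) * x * qterm x s q (m + 1) (j + 1) + q ^ (m + 1) * s * qterm x s q m j :=
    fun j _ => step_index hq1 x s m j hm
  rw [Finset.sum_congr rfl e3, Finset.sum_add_distrib, step_j0 hq1 x s m,
      ← Finset.mul_sum, ← Finset.mul_sum]
  ring

set_option maxHeartbeats 1000000 in
lemma base_one {q : ℂ} (hq1 : ‖q‖ < 1) (x s : ℂ) :
    qcT x s q 1 = ∑ j ∈ Finset.range 2, qterm x s q 1 j := by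
  rw [Finset.sum_range_succ, Finset.sum_range_one,
      qterm_zero x s q (show 1 < 2 * 1 by omega), add_zero,
      show (1 : ℕ) = 2 * 0 + 1 by ring, qterm_closed hq1 x s 0 1 0 (by omega)]
  have h1 := one_sub_ne hq1
  have hq1' : (1 : ℂ) - q ^ 1 ≠ 0 := one_sub_pow_ne hq1 le_rfl
  show x = _
  rw [qfact_zero, qpoch_zero, qfact_succ q 0, qfact_zero]
  unfold qint
  field_simp
  simp

set_option maxHeartbeats 1000000 in
lemma base_two {q : ℂ} (hq1 : ‖q‖ < 1) (x s : ℂ) :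
    qcT x s q 2 = ∑ j ∈ Finset.range 3, qterm x s q 2 j := by
  rw [Finset.sum_range_succ, Finset.sum_range_succ, Finset.sum_range_one,
      qterm_zero x s q (show 2 < 2 * 2 by omega), add_zero,
      show (2 : ℕ) = 2 * 0 + 2 by ring, qterm_closed hq1 x s 0 2 1 (by omega),
      show (2 * 0 + 2 : ℕ) = 2 * 1 + 0 by ring, qterm_closed hq1 x s 1 0 0 (by omega)]
  have h1 := one_sub_ne hq1
  have hq1' : (1 : ℂ) - q ^ 1 ≠ 0 := one_sub_pow_ne hq1 le_rfl
  have hq2' : (1 : ℂ) - q ^ 2 ≠ 0 := one_sub_pow_ne hq1 (by omega)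
  have hf0 := qfact_ne hq1 0
  have hf1 := qfact_ne hq1 1
  have hf2 := qfact_ne hq1 2
  have hp0 := qpoch_ne hq1 0
  have hp1 := qpoch_ne hq1 1
  have hD1 : (1 - q) * qfact q 2 * qfact q 0 * qpoch (-q) q 0 ≠ 0 :=
    mul_ne_zero (mul_ne_zero (mul_ne_zero h1 hf2) hf0) hp0
  have hD2 : (1 - q) * qfact q 0 * qfact q 1 * qpoch (-q) q 1 ≠ 0 :=
    mul_ne_zero (mul_ne_zero (mul_ne_zero h1 hf0) hf1) hp1
  show (1 + q ^ (0 + 1)) * x * x + q ^ (0 + 1) * s * 1 = _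
  rw [div_add_div _ _ hD1 hD2, eq_div_iff (mul_ne_zero hD1 hD2)]
  rw [show (2 : ℕ) = 1 + 1 from rfl, qfact_succ q 1, qfact_succ q 0, qfact_zero,
      qpoch_succ (-q) q 0, qpoch_zero]
  unfold qint
  have hp1' : (1 : ℂ) - q ^ 0 * -q ≠ 0 := by
    have := one_add_pow_ne hq1 (k := 1) le_rfl
    intro h; apply this; rw [← h]; ring
  field_simp
  ring

lemma qcT_sum {q : ℂ} (hq1 : ‖q‖ < 1) (x s : ℂ) : ∀ n : ℕ,
    qcT x s q (n + 1) = ∑ j ∈ Finset.range (n + 2), qterm x s q (n + 1) j ∧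
    qcT x s q (n + 2) = ∑ j ∈ Finset.range (n + 3), qterm x s q (n + 2) j := by
  intro n
  induction n with
  | zero => exact ⟨base_one hq1 x s, base_two hq1 x s⟩
  | succ k ih =>
    refine ⟨ih.2, ?_⟩
    rw [show k + 1 + 2 = (k + 1) + 2 from rfl, qcT_succ_succ x s q (k + 1),
        ih.1, ih.2, step_sum hq1 x s (k + 1) (by omega)]

theorem qcT_explicit (q : ℂ) (hq0 : 0 < ‖q‖) (hq1 : ‖q‖ < 1)
    (x s : ℂ) (n : ℕ) (hn : 0 < n) :
    qcT x s q n = ∑ j ∈ Finset.range (n / 2 + 1),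
      q ^ (j ^ 2) * (qint q n / qint q (n - j)) * qbinom q (n - j) j *
        (qpoch (-q) q (n - j - 1) / qpoch (-q) q j) * s ^ j * x ^ (n - 2 * j) := by
  obtain ⟨m, rfl⟩ : ∃ m, n = m + 1 := ⟨n - 1, by omega⟩
  rw [(qcT_sum hq1 x s m).1]
  exact (Finset.sum_subset
    (by intro j hj; simp only [Finset.mem_range] at *; omega)
    (fun j hj hnj => qterm_zero x s q
      (by simp only [Finset.mem_range] at hj hnj; omega))).symm
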